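/- Let T = T_{γ₁,γ₂} with associated point y = y(T), and let g = α^t with t ∈ ℤ_{≥0} or g = α^t·w with t ∈ ℤ_{>0}. If t > 0 or y ≠ 0, then K ∩ g·T·g^{−1} = Z·(K ∩ g·T_{0+}·g^{−1}), where T_{0+} := T ∩ G_{y,0+} and G_{y,0+} := ∪_{r>0} G_{y,r}. -/

import Mathlib

open Matrix
open scoped Pointwise

noncomputable section

/-- Ambient data for the paper: `E` is the unramified quadratic extension `F(√ε)` of a
nonarchimedean local field `F` of odd residual characteristic.  The field `F` is realized
as the fixed field of the nontrivial `F`-automorphism `σ` of `E`; `ν` is the discrete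
valuation of `E` (extending the valuation of `F` normalized by `ν ϖ = 1` at a uniformizer
`ϖ` of `F`, and still surjecting onto `ℤ` since `E/F` is unramified); `q` is the (odd)
cardinality of the residue field of `F` (so `q²` is that of `E`); `ε ∈ O_F^×` is a
non-square unit and `sqε = √ε` generates `E` over `F`.  The standard facts about the
norm map and squares are included as fields. -/
structure Setting (E : Type*) [Field E] where
  /-- the nontrivial `F`-automorphism of `E`, written `x̄ = σ x` -/
  σ : E →+* E
  σσ : ∀ x, σ (σ x) = x
  σ_ne_id : σ ≠ RingHom.id E
  /-- the valuation (only its values at nonzero elements matter) -/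
  ν : E → ℤ
  ν_mul : ∀ {x y : E}, x ≠ 0 → y ≠ 0 → ν (x * y) = ν x + ν y
  ν_add : ∀ {x y : E}, x ≠ 0 → y ≠ 0 → x + y ≠ 0 → min (ν x) (ν y) ≤ ν (x + y)
  ν_σ : ∀ x, ν (σ x) = ν x
  ν_surj : ∀ n : ℤ, ∃ x : E, x ≠ 0 ∧ ν x = n
  /-- a uniformizer of `F` -/
  ϖ : E
  ϖ_ne_zero : ϖ ≠ 0
  ϖ_fixed : σ ϖ = ϖ
  ν_ϖ : ν ϖ = 1
  /-- the residual cardinality of `F` -/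
  q : ℕ
  q_odd : Odd q
  one_lt_q : 1 < q
  /-- a non-square unit of `O_F` -/
  ε : E
  ε_fixed : σ ε = ε
  ε_ne_zero : ε ≠ 0
  ν_ε : ν ε = 0
  ε_nonsquare : ¬ ∃ f : E, σ f = f ∧ f * f = ε
  /-- a square root `√ε ∈ E` of `ε` -/
  sqε : E
  sqε_sq : sqε * sqε = ε
  sqε_conj : σ sqε = -sqε
  /-- `E = F(√ε)` -/
  generates : ∀ x : E, ∃ a b : E, σ a = a ∧ σ b = b ∧ x = a + b * sqε
  /-- the norm maps `O_E^×` onto `O_F^×` -/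
  norm_surj_units : ∀ y : E, σ y = y → y ≠ 0 → ν y = 0 →
    ∃ x : E, x ≠ 0 ∧ ν x = 0 ∧ x * σ x = y
  /-- the norm maps `1 + p_E^d` onto `1 + p_F^d` for every `d ≥ 1` -/
  norm_surj_one_add : ∀ d : ℤ, 1 ≤ d → ∀ y : E, σ y = y → (y - 1 = 0 ∨ d ≤ ν (y - 1)) →
    ∃ x : E, (x - 1 = 0 ∨ d ≤ ν (x - 1)) ∧ x * σ x = y
  /-- the residue field of `F` has `q` elements -/
  residue_F : ∃ R : Finset E, R.card = q ∧ (∀ r ∈ R, σ r = r ∧ (r = 0 ∨ 0 ≤ ν r)) ∧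
    ∀ x : E, σ x = x → (x = 0 ∨ 0 ≤ ν x) →
      ∃! r, r ∈ R ∧ (x - r = 0 ∨ 1 ≤ ν (x - r))
  /-- the residue field of `E` has `q²` elements -/
  residue_E : ∃ R : Finset E, R.card = q ^ 2 ∧ (∀ r ∈ R, r = 0 ∨ 0 ≤ ν r) ∧
    ∀ x : E, (x = 0 ∨ 0 ≤ ν x) →
      ∃! r, r ∈ R ∧ (x - r = 0 ∨ 1 ≤ ν (x - r))
  /-- Hensel: a unit of `O_E` that is a square modulo `p_E` is a square (residue char. odd) -/
  hensel_sq : ∀ u w : E, u ≠ 0 → ν u = 0 → w ≠ 0 → ν w = 0 →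
    (w * w - u = 0 ∨ 1 ≤ ν (w * w - u)) → ∃ v : E, v * v = u

namespace Setting

variable {E : Type*} [Field E] (S : Setting E)

/-- `x` lies in the ring of integers `O_E`. -/
def inOE (x : E) : Prop := x = 0 ∨ 0 ≤ S.ν x

/-- `x` lies in the (fractional, if `d ≤ 0`) ideal `p_E^d`. -/
def inpE (d : ℤ) (x : E) : Prop := x = 0 ∨ d ≤ S.ν x

/-- `x` is a unit of `O_E`. -/
def unitOE (x : E) : Prop := x ≠ 0 ∧ S.ν x = 0

/-- `x` lies in the subfield `F` (the fixed field of `σ`). -/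
def inF (x : E) : Prop := S.σ x = x

/-- `x` is a unit of `O_F`. -/
def unitOF (x : E) : Prop := S.σ x = x ∧ x ≠ 0 ∧ S.ν x = 0

/-- `x` lies in `E¹`, i.e. has norm one. -/
def normOne (x : E) : Prop := x * S.σ x = 1

/-- `x ∈ √ε·F`. -/
def inSqεF (x : E) : Prop := ∃ f : E, S.σ f = f ∧ x = S.sqε * f

/-- Entrywise application of `σ` to a matrix, `ḡ`. -/
def mbar (g : Matrix (Fin 2) (Fin 2) E) : Matrix (Fin 2) (Fin 2) E :=
  Matrix.of fun i j => S.σ (g i j)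

/-- The antidiagonal matrix `w = [[0,1],[1,0]]` defining the hermitian form. -/
def wmat (_S : Setting E) : Matrix (Fin 2) (Fin 2) E := !![0, 1; 1, 0]

/-- Membership in `G = U(1,1)(F) = {g : ḡᵀ·w·g = w}`. -/
def inG (g : Matrix (Fin 2) (Fin 2) E) : Prop :=
  (S.mbar g)ᵀ * S.wmat * g = S.wmat

/-- `G = U(1,1)(F)`, as a set of 2×2 matrices over `E`. -/
def Gset : Set (Matrix (Fin 2) (Fin 2) E) := {g | S.inG g}

/-- `G_der = SU(1,1)(F) = {g ∈ G : det g = 1}`. -/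
def Gder : Set (Matrix (Fin 2) (Fin 2) E) := {g | S.inG g ∧ g.det = 1}

/-- The standard maximal compact subgroup `K` of `G` (entries in `O_E`). -/
def Kset : Set (Matrix (Fin 2) (Fin 2) E) := {g | S.inG g ∧ ∀ i j, S.inOE (g i j)}

/-- The congruence subgroup `K_d = {k ∈ K : k − 1 ∈ p_E^d·M₂(O_E)}`. -/
def Kfil (d : ℤ) : Set (Matrix (Fin 2) (Fin 2) E) :=
  {g | g ∈ S.Kset ∧ ∀ i j, S.inpE d ((g - 1) i j)}

/-- The subgroup `B` of upper triangular matrices in `K`. -/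
def Bset : Set (Matrix (Fin 2) (Fin 2) E) := {g | g ∈ S.Kset ∧ g 1 0 = 0}

/-- The subgroup `B^op` of lower triangular matrices in `K`. -/
def Bop : Set (Matrix (Fin 2) (Fin 2) E) := {g | g ∈ S.Kset ∧ g 0 1 = 0}

/-- The center `Z = {z·I : z ∈ E¹}` of `G`. -/
def Zset : Set (Matrix (Fin 2) (Fin 2) E) :=
  {g | ∃ z : E, S.normOne z ∧ g = z • (1 : Matrix (Fin 2) (Fin 2) E)}

/-- The matrix `α^t = diag(ϖ^{−t}, ϖ^t)`. -/
def αmat (t : ℕ) : Matrix (Fin 2) (Fin 2) E := !![(S.ϖ ^ t)⁻¹, 0; 0, S.ϖ ^ t]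

/-- The matrix `η = diag(1, ϖ)` (it normalizes `G`). -/
def ηmat : Matrix (Fin 2) (Fin 2) E := !![1, 0; 0, S.ϖ]

/-- The matrix `η⁻¹ = diag(1, ϖ⁻¹)`. -/
def ηinv : Matrix (Fin 2) (Fin 2) E := !![1, 0; 0, S.ϖ⁻¹]

/-- The torus `T_{γ₁,γ₂} = {[[a,bγ₁],[bγ₂,a]] : a·ā + b·b̄·γ₁γ₂ = 1, ā·b ∈ √ε·F}`. -/
def Tset (γ₁ γ₂ : E) : Set (Matrix (Fin 2) (Fin 2) E) :=
  {g | ∃ a b : E, g = !![a, b * γ₁; b * γ₂, a] ∧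
    a * S.σ a + b * S.σ b * (γ₁ * γ₂) = 1 ∧ S.inSqεF (S.σ a * b)}

/-- The Moy–Prasad filtration subgroup `G_{y,r}` of `G` (for `r > 0`). -/
def Gfil (y r : ℚ) : Set (Matrix (Fin 2) (Fin 2) E) :=
  {g | S.inG g ∧ S.inpE ⌈r⌉ (g 0 0 - 1) ∧ S.inpE ⌈r⌉ (g 1 1 - 1) ∧
    S.inpE ⌈r - y⌉ (g 0 1) ∧ S.inpE ⌈r + y⌉ (g 1 0)}

/-- `G_{y,0+} = ⋃_{r>0} G_{y,r}`. -/
def Gfil0plus (y : ℚ) : Set (Matrix (Fin 2) (Fin 2) E) :=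
  {g | ∃ r : ℚ, 0 < r ∧ g ∈ S.Gfil y r}

end Setting




namespace Statement16Aux

variable {E : Type*} [Field E] (S : Setting E)

lemma nu_one : S.ν 1 = 0 := by
  have := S.ν_mul (x := 1) (y := 1) one_ne_zero one_ne_zero
  simpa using this.symm

lemma nu_inv {x : E} (hx : x ≠ 0) : S.ν x⁻¹ = -S.ν x := by
  have := S.ν_mul hx (inv_ne_zero hx)
  rw [mul_inv_cancel₀ hx, nu_one] at this
  omega

lemma nu_neg {x : E} (hx : x ≠ 0) : S.ν (-x) = S.ν x := by
  have h1 : ((-1 : E)) ≠ 0 := by norm_num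
  have hm : S.ν (-1 : E) = 0 := by
    have := S.ν_mul (x := (-1:E)) (y := (-1:E)) h1 h1
    rw [neg_mul_neg, one_mul, nu_one] at this
    omega
  have := S.ν_mul h1 hx
  rw [neg_one_mul] at this
  rw [this, hm]; ring

lemma nu_pow (t : ℕ) : S.ν (S.ϖ ^ t) = t := by
  induction t with
  | zero => simpa using nu_one S
  | succ n ih =>
    rw [pow_succ, S.ν_mul (pow_ne_zero n S.ϖ_ne_zero) S.ϖ_ne_zero, ih, S.ν_ϖ]
    push_cast; ring

lemma sigma_ne_zero {x : E} (hx : x ≠ 0) : S.σ x ≠ 0 := fun h =>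
  hx (by rw [← S.σσ x, h, map_zero])

lemma inpE_mono {m m' : ℤ} (h : m' ≤ m) {x : E} (hx : S.inpE m x) : S.inpE m' x := by
  rcases hx with hx | hx
  · exact Or.inl hx
  · exact Or.inr (le_trans h hx)

lemma inpE_mul {m n : ℤ} {x y : E} (hx : S.inpE m x) (hy : S.inpE n y) :
    S.inpE (m + n) (x * y) := by
  rcases eq_or_ne x 0 with rfl | hx0
  · exact Or.inl (zero_mul y)
  rcases eq_or_ne y 0 with rfl | hy0
  · exact Or.inl (mul_zero x)
  rcases hx with hx | hx
  · exact absurd hx hx0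
  rcases hy with hy | hy
  · exact absurd hy hy0
  exact Or.inr (by rw [S.ν_mul hx0 hy0]; omega)

lemma inpE_neg {m : ℤ} {x : E} (hx : S.inpE m x) : S.inpE m (-x) := by
  rcases eq_or_ne x 0 with rfl | hx0
  · exact Or.inl (neg_zero)
  rcases hx with hx | hx
  · exact absurd hx hx0
  · exact Or.inr (by rw [nu_neg S hx0]; exact hx)

lemma inpE_unit_mul {u x : E} (hu : u ≠ 0) (hν : S.ν u = 0) {m : ℤ}
    (h : S.inpE m x) : S.inpE m (u * x) := by
  have := inpE_mul S (m := 0) (n := m) (Or.inr (le_of_eq hν.symm)) h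
  simpa using this

/-- strip a nonzero factor: from `x * c ∈ p^m` conclude `x ∈ p^{m - ν c}`. -/
lemma inpE_shift {m : ℤ} {x c : E} (hc : c ≠ 0) (h : S.inpE m (x * c)) :
    S.inpE (m - S.ν c) x := by
  rcases eq_or_ne x 0 with rfl | hx0
  · exact Or.inl rfl
  rcases h with h | h
  · exact absurd h (mul_ne_zero hx0 hc)
  · exact Or.inr (by rw [S.ν_mul hx0 hc] at h; omega)

lemma one_sub_small {u : E} (h : S.inpE 1 u) : 1 - u ≠ 0 ∧ S.ν (1 - u) = 0 := by
  rcases eq_or_ne u 0 with rfl | hu0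
  · simpa using nu_one S
  rcases h with h | h
  · exact absurd h hu0
  have hne : (1 : E) - u ≠ 0 := by
    intro h0
    have : u = 1 := by linear_combination -h0
    rw [this, nu_one] at h; omega
  refine ⟨hne, ?_⟩
  have hge : 0 ≤ S.ν (1 - u) := by
    have := S.ν_add (x := (1:E)) (y := -u) one_ne_zero (neg_ne_zero.mpr hu0)
      (by rw [← sub_eq_add_neg]; exact hne)
    rw [← sub_eq_add_neg, nu_one, nu_neg S hu0] at this
    omega
  have hle : S.ν (1 - u) ≤ 0 := by
    by_contra hlt
    push_neg at hlt
    have := S.ν_add (x := 1 - u) (y := u) hne hu0 (by rw [sub_add_cancel]; exact one_ne_zero)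
    rw [sub_add_cancel, nu_one] at this
    omega
  omega

lemma normOne_props {z : E} (hz : S.normOne z) : z ≠ 0 ∧ S.ν z = 0 := by
  have hz0 : z ≠ 0 := by
    intro h; rw [Setting.normOne, h, zero_mul] at hz; exact zero_ne_one hz
  refine ⟨hz0, ?_⟩
  have := S.ν_mul hz0 (sigma_ne_zero S hz0)
  rw [hz, nu_one, S.ν_σ] at this
  omega

lemma normOne_inv {z : E} (hz : S.normOne z) : S.normOne z⁻¹ := by
  have hz0 := (normOne_props S hz).1
  rw [Setting.normOne, map_inv₀, ← mul_inv, hz, inv_one]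

lemma smul_Kset {z : E} (hz : S.normOne z) {k : Matrix (Fin 2) (Fin 2) E}
    (hk : k ∈ S.Kset) : z • k ∈ S.Kset := by
  obtain ⟨hz0, hνz⟩ := normOne_props S hz
  constructor
  · have hmb : S.mbar (z • k) = S.σ z • S.mbar k := by
      ext i j; simp [Setting.mbar, _root_.map_mul]
    rw [Setting.inG, hmb, Matrix.transpose_smul, Matrix.mul_smul, Matrix.smul_mul,
      Matrix.smul_mul, smul_smul, hz, one_smul]
    exact hk.1
  · intro i j
    have : (z • k) i j = z * k i j := by simp
    rw [this]
    exact inpE_unit_mul S hz0 hνz (hk.2 i j)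

lemma smul_Tset {z : E} (hz : S.normOne z) {γ₁ γ₂ : E} {τ : Matrix (Fin 2) (Fin 2) E}
    (hτ : τ ∈ S.Tset γ₁ γ₂) : z • τ ∈ S.Tset γ₁ γ₂ := by
  obtain ⟨a, b, rfl, hnorm, f, hf, hfe⟩ := hτ
  refine ⟨z * a, z * b, ?_, ?_, f, hf, ?_⟩
  · ext i j
    fin_cases i <;> fin_cases j <;> simp [mul_assoc]
  · have : z * a * S.σ (z * a) + z * b * S.σ (z * b) * (γ₁ * γ₂) =
        (z * S.σ z) * (a * S.σ a + b * S.σ b * (γ₁ * γ₂)) := by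
      rw [_root_.map_mul, _root_.map_mul]; ring
    rw [this, hz, hnorm, one_mul]
  · have : S.σ (z * a) * (z * b) = (z * S.σ z) * (S.σ a * b) := by
      rw [_root_.map_mul]; ring
    rw [this, hz, one_mul]; exact hfe

lemma Tset_inG {γ₁ γ₂ : E} (hγ₁ : S.σ γ₁ = γ₁) (hγ₂ : S.σ γ₂ = γ₂)
    {τ : Matrix (Fin 2) (Fin 2) E} (hτ : τ ∈ S.Tset γ₁ γ₂) : S.inG τ := by
  obtain ⟨a, b, rfl, hnorm, f, hf, hfe⟩ := hτ
  have e2 : a * S.σ b = -(S.sqε * f) := by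
    have : a * S.σ b = S.σ (S.σ a * b) := by rw [_root_.map_mul, S.σσ]
    rw [this, hfe, _root_.map_mul, S.sqε_conj, hf]; ring
  rw [Setting.inG]
  ext i j
  fin_cases i <;> fin_cases j <;>
    simp [Setting.mbar, Setting.wmat, Matrix.mul_apply, Fin.sum_univ_two, _root_.map_mul,
      hγ₁, hγ₂] <;>
    first
      | linear_combination hnorm
      | linear_combination γ₂ * hfe + γ₂ * e2
      | linear_combination γ₁ * hfe + γ₁ * e2

/-- The key scalar-adjustment lemma. -/
lemma key {γ₁ γ₂ : E} (hγ₁ : S.σ γ₁ = γ₁) (hγ₂ : S.σ γ₂ = γ₂)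
    (hγ₂0 : γ₂ ≠ 0) (y r : ℚ) (hr : 0 < r) (hr1 : (⌈r⌉ : ℤ) = 1)
    (h3 : 1 ≤ ⌈r - y⌉ + ⌈r + y⌉) {a b : E}
    (hnorm : a * S.σ a + b * S.σ b * (γ₁ * γ₂) = 1)
    (hsq : S.inSqεF (S.σ a * b))
    (hb1 : S.inpE ⌈r - y⌉ (b * γ₁)) (hb2 : S.inpE ⌈r + y⌉ (b * γ₂)) :
    ∃ z : E, S.normOne z ∧
      z⁻¹ • !![a, b * γ₁; b * γ₂, a] ∈ S.Tset γ₁ γ₂ ∩ S.Gfil0plus y := by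
  have hb3 : S.inpE 1 (b * S.σ b * (γ₁ * γ₂)) := by
    rcases eq_or_ne b 0 with rfl | hb0
    · exact Or.inl (by simp)
    have h2' : S.inpE ⌈r + y⌉ (S.σ b * γ₂) := by
      rcases hb2 with h | h
      · exact absurd h (mul_ne_zero hb0 hγ₂0)
      · refine Or.inr ?_
        rw [S.ν_mul (sigma_ne_zero S hb0) hγ₂0, S.ν_σ]
        rw [S.ν_mul hb0 hγ₂0] at h
        omega
    have heq : b * S.σ b * (γ₁ * γ₂) = (b * γ₁) * (S.σ b * γ₂) := by ring
    rw [heq]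
    exact inpE_mono S h3 (inpE_mul S hb1 h2')
  obtain ⟨hne, hν0⟩ := one_sub_small S hb3
  have haa : a * S.σ a = 1 - b * S.σ b * (γ₁ * γ₂) := by linear_combination hnorm
  have ha0 : a ≠ 0 := by
    intro h; rw [h, zero_mul] at haa; exact hne haa.symm
  have hσa0 : S.σ a ≠ 0 := sigma_ne_zero S ha0
  have hνa : S.ν a = 0 := by
    have := S.ν_mul ha0 hσa0
    rw [haa, hν0, S.ν_σ] at this
    omega
  have hfix : S.σ (a * S.σ a) = a * S.σ a := by rw [_root_.map_mul, S.σσ]; ring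
  have hsub : S.inpE 1 (a * S.σ a - 1) := by
    have h4 : a * S.σ a - 1 = -(b * S.σ b * (γ₁ * γ₂)) := by linear_combination hnorm
    rw [h4]
    exact inpE_neg S hb3
  obtain ⟨x, hx1, hxn⟩ := S.norm_surj_one_add 1 le_rfl (a * S.σ a) hfix hsub
  have hx0 : x ≠ 0 := by
    intro h
    rw [h, zero_mul] at hxn
    exact (mul_ne_zero ha0 hσa0) hxn.symm
  have hσx0 : S.σ x ≠ 0 := sigma_ne_zero S hx0
  have hνx : S.ν x = 0 := by
    have := S.ν_mul hx0 hσx0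
    rw [hxn, haa, hν0, S.ν_σ] at this
    omega
  set z := a * x⁻¹ with hzdef
  have hznorm : S.normOne z := by
    rw [Setting.normOne, _root_.map_mul, map_inv₀]
    have h5 : a * x⁻¹ * (S.σ a * (S.σ x)⁻¹) = a * S.σ a * (x * S.σ x)⁻¹ := by
      rw [mul_inv]; ring
    rw [h5, hxn, mul_inv_cancel₀ (mul_ne_zero ha0 hσa0)]
  have hinv : S.normOne z⁻¹ := normOne_inv S hznorm
  obtain ⟨hzi0, hνzi⟩ := normOne_props S hinv
  have hzia : z⁻¹ * a = x := by
    rw [hzdef, mul_inv, inv_inv, mul_comm a⁻¹ x, mul_assoc, inv_mul_cancel₀ ha0, mul_one]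
  have hTmem : z⁻¹ • !![a, b * γ₁; b * γ₂, a] ∈ S.Tset γ₁ γ₂ :=
    smul_Tset S hinv ⟨a, b, rfl, hnorm, hsq⟩
  refine ⟨z, hznorm, hTmem, r, hr, Tset_inG S hγ₁ hγ₂ hTmem, ?_, ?_, ?_, ?_⟩
  · have he : (z⁻¹ • !![a, b * γ₁; b * γ₂, a]) 0 0 = z⁻¹ * a := by simp
    rw [he, hzia, hr1]
    exact hx1
  · have he : (z⁻¹ • !![a, b * γ₁; b * γ₂, a]) 1 1 = z⁻¹ * a := by simp
    rw [he, hzia, hr1]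
    exact hx1
  · have he : (z⁻¹ • !![a, b * γ₁; b * γ₂, a]) 0 1 = z⁻¹ * (b * γ₁) := by simp
    rw [he]
    exact inpE_unit_mul S hzi0 hνzi hb1
  · have he : (z⁻¹ • !![a, b * γ₁; b * γ₂, a]) 1 0 = z⁻¹ * (b * γ₂) := by simp
    rw [he]
    exact inpE_unit_mul S hzi0 hνzi hb2

/-- The common finishing step of the hard inclusion. -/
lemma mainstep {γ₁ γ₂ : E} (hγ₁ : S.σ γ₁ = γ₁) (hγ₂ : S.σ γ₂ = γ₂)
    (hγ₂0 : γ₂ ≠ 0) (y r : ℚ) (hr : 0 < r) (hr1 : (⌈r⌉ : ℤ) = 1)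
    (h3 : 1 ≤ ⌈r - y⌉ + ⌈r + y⌉) {a b : E}
    (hnorm : a * S.σ a + b * S.σ b * (γ₁ * γ₂) = 1)
    (hsq : S.inSqεF (S.σ a * b))
    (hb1 : S.inpE ⌈r - y⌉ (b * γ₁)) (hb2 : S.inpE ⌈r + y⌉ (b * γ₂))
    {g : Matrix (Fin 2) (Fin 2) E}
    (hkK : g * !![a, b * γ₁; b * γ₂, a] * g⁻¹ ∈ S.Kset) :
    g * !![a, b * γ₁; b * γ₂, a] * g⁻¹ ∈
      S.Zset * (S.Kset ∩ ((fun x => g * x * g⁻¹) ''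
        (S.Tset γ₁ γ₂ ∩ S.Gfil0plus y))) := by
  obtain ⟨z, hz, hmem⟩ := key S hγ₁ hγ₂ hγ₂0 y r hr hr1 h3 hnorm hsq hb1 hb2
  obtain ⟨hz0, hνz⟩ := normOne_props S hz
  set M := !![a, b * γ₁; b * γ₂, a] with hM
  have hsplit : g * M * g⁻¹ = (z • (1 : Matrix (Fin 2) (Fin 2) E)) *
      (g * (z⁻¹ • M) * g⁻¹) := by
    rw [smul_mul_assoc, one_mul, mul_smul_comm, smul_mul_assoc, smul_smul,
      mul_inv_cancel₀ hz0, one_smul]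
  have hK' : g * (z⁻¹ • M) * g⁻¹ ∈ S.Kset := by
    have h2 : g * (z⁻¹ • M) * g⁻¹ = z⁻¹ • (g * M * g⁻¹) := by
      rw [mul_smul_comm, smul_mul_assoc]
    rw [h2]
    exact smul_Kset S (normOne_inv S hz) hkK
  rw [hsplit]
  exact Set.mul_mem_mul ⟨z, hz, rfl⟩ ⟨hK', ⟨z⁻¹ • M, hmem, rfl⟩⟩


lemma conj_diag' {p : E} (hp : p ≠ 0) (a b c : E) :
    !![p⁻¹, 0; 0, p] * !![a, b; c, a] * !![p⁻¹, (0:E); 0, p]⁻¹ =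
      !![a, b * (p * p)⁻¹; c * (p * p), a] := by
  have hinv : !![p⁻¹, (0:E); 0, p]⁻¹ = !![p, 0; 0, p⁻¹] := by
    apply Matrix.inv_eq_right_inv
    rw [Matrix.mul_fin_two, Matrix.one_fin_two]
    field_simp
    simp
  rw [hinv, Matrix.mul_fin_two, Matrix.mul_fin_two]
  ext i j
  fin_cases i <;> fin_cases j <;> (try simp) <;> (try field_simp) <;> (try ring)

lemma conj_anti' {p : E} (hp : p ≠ 0) (a b c : E) :
    !![0, p⁻¹; p, 0] * !![a, b; c, a] * !![(0:E), p⁻¹; p, 0]⁻¹ =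
      !![a, c * (p * p)⁻¹; b * (p * p), a] := by
  have hinv : !![(0:E), p⁻¹; p, 0]⁻¹ = !![0, p⁻¹; p, 0] := by
    apply Matrix.inv_eq_right_inv
    rw [Matrix.mul_fin_two, Matrix.one_fin_two]
    field_simp
    simp
  rw [hinv, Matrix.mul_fin_two, Matrix.mul_fin_two]
  ext i j
  fin_cases i <;> fin_cases j <;> (try simp) <;> (try field_simp) <;> (try ring)

lemma entry_bound {x p : E} (hp : p ≠ 0) {n : ℤ} (hn : S.ν p = n)
    (h : S.inOE (x * (p * p)⁻¹)) : S.inpE (2 * n) x := by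
  have hpp : p * p ≠ 0 := mul_ne_zero hp hp
  have h0 : S.inpE 0 (x * (p * p)⁻¹) := h
  have := inpE_shift S (inv_ne_zero hpp) h0
  rwa [nu_inv S hpp, S.ν_mul hp hp, hn, show (0 : ℤ) - -(n + n) = 2 * n by ring] at this

/-- Case `(γ₁,γ₂) = (1,1)`, `y = 0`, `g = α^t` with `t > 0`. -/
lemma case11 {a b : E} (hnorm : a * S.σ a + b * S.σ b * ((1:E) * 1) = 1)
    (hsq : S.inSqεF (S.σ a * b)) (t : ℕ) (ht : 0 < t)
    (hkK : S.αmat t * !![a, b * 1; b * 1, a] * (S.αmat t)⁻¹ ∈ S.Kset) :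
    S.αmat t * !![a, b * 1; b * 1, a] * (S.αmat t)⁻¹ ∈
      S.Zset * (S.Kset ∩ ((fun x => S.αmat t * x * (S.αmat t)⁻¹) ''
        (S.Tset 1 1 ∩ S.Gfil0plus 0))) := by
  have hp : S.ϖ ^ t ≠ 0 := pow_ne_zero _ S.ϖ_ne_zero
  have hE : S.αmat t * !![a, b * 1; b * 1, a] * (S.αmat t)⁻¹ =
      !![a, b * 1 * (S.ϖ ^ t * S.ϖ ^ t)⁻¹; b * 1 * (S.ϖ ^ t * S.ϖ ^ t), a] :=
    conj_diag' hp a (b * 1) (b * 1)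
  have h01 : S.inOE (b * 1 * (S.ϖ ^ t * S.ϖ ^ t)⁻¹) := by
    have h := hkK.2 0 1
    rw [hE] at h
    simpa using h
  have hbb : S.inpE (2 * t) (b * 1) := entry_bound S hp (nu_pow S t) h01
  refine mainstep S (map_one S.σ) (map_one S.σ) one_ne_zero 0 1 one_pos
    (by norm_num) (by norm_num) hnorm hsq ?_ ?_ hkK
  · rw [show (⌈(1:ℚ) - 0⌉ : ℤ) = 1 by norm_num]
    exact inpE_mono S (by omega) hbb
  · rw [show (⌈(1:ℚ) + 0⌉ : ℤ) = 1 by norm_num]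
    exact inpE_mono S (by omega) hbb

/-- Case `(γ₁,γ₂) = (ϖ⁻¹,ϖ)`, `y = 1`, `g = α^t`. -/
lemma case2 {a b : E} (hnorm : a * S.σ a + b * S.σ b * (S.ϖ⁻¹ * S.ϖ) = 1)
    (hsq : S.inSqεF (S.σ a * b)) (t : ℕ)
    (hkK : S.αmat t * !![a, b * S.ϖ⁻¹; b * S.ϖ, a] * (S.αmat t)⁻¹ ∈ S.Kset) :
    S.αmat t * !![a, b * S.ϖ⁻¹; b * S.ϖ, a] * (S.αmat t)⁻¹ ∈
      S.Zset * (S.Kset ∩ ((fun x => S.αmat t * x * (S.αmat t)⁻¹) ''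
        (S.Tset S.ϖ⁻¹ S.ϖ ∩ S.Gfil0plus 1))) := by
  have hp : S.ϖ ^ t ≠ 0 := pow_ne_zero _ S.ϖ_ne_zero
  have hE : S.αmat t * !![a, b * S.ϖ⁻¹; b * S.ϖ, a] * (S.αmat t)⁻¹ =
      !![a, b * S.ϖ⁻¹ * (S.ϖ ^ t * S.ϖ ^ t)⁻¹; b * S.ϖ * (S.ϖ ^ t * S.ϖ ^ t), a] :=
    conj_diag' hp a (b * S.ϖ⁻¹) (b * S.ϖ)
  have h01 : S.inOE (b * S.ϖ⁻¹ * (S.ϖ ^ t * S.ϖ ^ t)⁻¹) := by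
    have h := hkK.2 0 1
    rw [hE] at h
    simpa using h
  have hbb : S.inpE (2 * t) (b * S.ϖ⁻¹) := entry_bound S hp (nu_pow S t) h01
  have hb : S.inpE (2 * t + 1) b := by
    have h := inpE_shift S (inv_ne_zero S.ϖ_ne_zero) hbb
    rwa [nu_inv S S.ϖ_ne_zero, S.ν_ϖ, show 2 * (t:ℤ) - -1 = 2 * t + 1 by ring] at h
  have hσγ₁ : S.σ S.ϖ⁻¹ = S.ϖ⁻¹ := by rw [map_inv₀, S.ϖ_fixed]
  refine mainstep S hσγ₁ S.ϖ_fixed S.ϖ_ne_zero 1 1 one_pos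
    (by norm_num) (by norm_num) hnorm hsq ?_ ?_ hkK
  · rw [show (⌈(1:ℚ) - 1⌉ : ℤ) = 0 by norm_num]
    exact inpE_mono S (by omega) hbb
  · rw [show (⌈(1:ℚ) + 1⌉ : ℤ) = 2 by norm_num]
    have := inpE_mul S hb (Or.inr (le_of_eq S.ν_ϖ.symm) : S.inpE 1 S.ϖ)
    exact inpE_mono S (by omega) this

/-- Ramified cases: `γ₁ = 1`, `ν γ₂ = 1`, `y = 1/2`. -/
lemma ramified_case {γ₂ : E} (hσγ₂ : S.σ γ₂ = γ₂) (hγ₂0 : γ₂ ≠ 0)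
    (hνγ₂ : S.ν γ₂ = 1) {a b : E}
    (hnorm : a * S.σ a + b * S.σ b * ((1:E) * γ₂) = 1)
    (hsq : S.inSqεF (S.σ a * b)) {g : Matrix (Fin 2) (Fin 2) E} (t : ℕ)
    (hg : g = S.αmat t ∨ (0 < t ∧ g = S.αmat t * S.wmat))
    (hkK : g * !![a, b * 1; b * γ₂, a] * g⁻¹ ∈ S.Kset) :
    g * !![a, b * 1; b * γ₂, a] * g⁻¹ ∈
      S.Zset * (S.Kset ∩ ((fun x => g * x * g⁻¹) ''
        (S.Tset 1 γ₂ ∩ S.Gfil0plus (1/2)))) := by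
  have hp : S.ϖ ^ t ≠ 0 := pow_ne_zero _ S.ϖ_ne_zero
  have hγ₂p : S.inpE 1 γ₂ := Or.inr (le_of_eq hνγ₂.symm)
  have hb1b2 : S.inpE ⌈(1:ℚ)/2 - 1/2⌉ (b * 1) ∧ S.inpE ⌈(1:ℚ)/2 + 1/2⌉ (b * γ₂) := by
    rcases hg with rfl | ⟨ht, rfl⟩
    · have hE : S.αmat t * !![a, b * 1; b * γ₂, a] * (S.αmat t)⁻¹ =
          !![a, b * 1 * (S.ϖ ^ t * S.ϖ ^ t)⁻¹; b * γ₂ * (S.ϖ ^ t * S.ϖ ^ t), a] :=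
        conj_diag' hp a (b * 1) (b * γ₂)
      have h01 : S.inOE (b * 1 * (S.ϖ ^ t * S.ϖ ^ t)⁻¹) := by
        have h := hkK.2 0 1
        rw [hE] at h
        simpa using h
      have hbb : S.inpE (2 * t) (b * 1) := entry_bound S hp (nu_pow S t) h01
      have hb : S.inpE (2 * t) b := by rwa [mul_one] at hbb
      constructor
      · rw [show (⌈(1:ℚ)/2 - 1/2⌉ : ℤ) = 0 by norm_num]
        exact inpE_mono S (by omega) hbb
      · rw [show (⌈(1:ℚ)/2 + 1/2⌉ : ℤ) = 1 by norm_num]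
        exact inpE_mono S (by omega) (inpE_mul S hb hγ₂p)
    · have hgw : S.αmat t * S.wmat = !![0, (S.ϖ ^ t)⁻¹; S.ϖ ^ t, 0] := by
        rw [Setting.αmat, Setting.wmat, Matrix.mul_fin_two]
        norm_num
      have hE : S.αmat t * S.wmat * !![a, b * 1; b * γ₂, a] * (S.αmat t * S.wmat)⁻¹ =
          !![a, b * γ₂ * (S.ϖ ^ t * S.ϖ ^ t)⁻¹; b * 1 * (S.ϖ ^ t * S.ϖ ^ t), a] := by
        rw [hgw]
        exact conj_anti' hp a (b * 1) (b * γ₂)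
      have h01 : S.inOE (b * γ₂ * (S.ϖ ^ t * S.ϖ ^ t)⁻¹) := by
        have h := hkK.2 0 1
        rw [hE] at h
        simpa using h
      have hbb : S.inpE (2 * t) (b * γ₂) := entry_bound S hp (nu_pow S t) h01
      have hb : S.inpE (2 * t - 1) b := by
        have h := inpE_shift S hγ₂0 hbb
        rwa [hνγ₂] at h
      constructor
      · rw [show (⌈(1:ℚ)/2 - 1/2⌉ : ℤ) = 0 by norm_num, mul_one]
        exact inpE_mono S (by omega) hb
      · rw [show (⌈(1:ℚ)/2 + 1/2⌉ : ℤ) = 1 by norm_num]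
        exact inpE_mono S (by omega) hbb
  exact mainstep S (map_one S.σ) hσγ₂ hγ₂0 (1/2) (1/2) (by norm_num)
    (by rw [Int.ceil_eq_iff] <;> norm_num) (by norm_num) hnorm hsq hb1b2.1 hb1b2.2 hkK

end Statement16Aux


open Statement16Aux in
/-- Let `T = T_{γ₁,γ₂}` with associated point `y`, and let `g = α^t`
(`t ≥ 0`) or, in the ramified case, `g = α^t·w` (`t > 0`).  If `t > 0` or `y ≠ 0`, then
`K ∩ g·T·g⁻¹ = Z·(K ∩ g·T_{0+}·g⁻¹)`, where `T_{0+} = T ∩ G_{y,0+}` and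
`G_{y,0+} = ⋃_{r>0} G_{y,r}`. -/
theorem statement16 {E : Type*} [Field E] (S : Setting E) (γ₁ γ₂ : E) (y : ℚ)
    (hpair : ((γ₁, γ₂) = ((1 : E), (1 : E)) ∧ y = 0) ∨
             ((γ₁, γ₂) = (S.ϖ⁻¹, S.ϖ) ∧ y = 1) ∨
             ((γ₁, γ₂) = ((1 : E), S.ϖ) ∧ y = 1/2) ∨
             ((γ₁, γ₂) = ((1 : E), S.ε⁻¹ * S.ϖ) ∧ y = 1/2))
    (g : Matrix (Fin 2) (Fin 2) E) (t : ℕ)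
    (hg : g = S.αmat t ∨
      (((γ₁, γ₂) = ((1 : E), S.ϖ) ∨ (γ₁, γ₂) = ((1 : E), S.ε⁻¹ * S.ϖ)) ∧
        0 < t ∧ g = S.αmat t * S.wmat))
    (hty : 0 < t ∨ y ≠ 0) :
    S.Kset ∩ ((fun x => g * x * g⁻¹) '' S.Tset γ₁ γ₂) =
      S.Zset *
        (S.Kset ∩ ((fun x => g * x * g⁻¹) '' (S.Tset γ₁ γ₂ ∩ S.Gfil0plus y))) := by
  have hνεϖ : S.ν (S.ε⁻¹ * S.ϖ) = 1 := by
    rw [S.ν_mul (inv_ne_zero S.ε_ne_zero) S.ϖ_ne_zero, nu_inv S S.ε_ne_zero, S.ν_ε, S.ν_ϖ]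
    norm_num
  have hϖ1 : S.ϖ ≠ 1 := by
    intro h
    have := S.ν_ϖ
    rw [h, nu_one] at this
    exact absurd this (by norm_num)
  have hεϖ1 : S.ε⁻¹ * S.ϖ ≠ 1 := by
    intro h
    rw [h, nu_one] at hνεϖ
    exact absurd hνεϖ (by norm_num)
  apply Set.Subset.antisymm
  · -- hard inclusion
    rintro k ⟨hkK, τ, hτT, hfk⟩
    obtain ⟨a, b, hτeq, hnorm, hsq⟩ := hτT
    subst hτeq
    subst hfk
    rcases hpair with ⟨hpq, hy⟩ | ⟨hpq, hy⟩ | ⟨hpq, hy⟩ | ⟨hpq, hy⟩ <;>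
      simp only [Prod.mk.injEq] at hpq <;> obtain ⟨rfl, rfl⟩ := hpq <;> subst hy
    · -- (1,1), y = 0
      have ht : 0 < t := by
        rcases hty with ht | hy'
        · exact ht
        · exact absurd rfl hy'
      rcases hg with rfl | ⟨hpq2, ht', rfl⟩
      · exact case11 S hnorm hsq t ht hkK
      · exfalso
        simp only [Prod.mk.injEq] at hpq2
        rcases hpq2 with ⟨-, h⟩ | ⟨-, h⟩
        · exact hϖ1 h.symm
        · exact hεϖ1 h.symm
    · -- (ϖ⁻¹, ϖ), y = 1
      rcases hg with rfl | ⟨hpq2, ht', rfl⟩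
      · exact case2 S hnorm hsq t hkK
      · exfalso
        have hϖinv : S.ϖ⁻¹ ≠ 1 := by
          intro h
          exact hϖ1 (by rw [← inv_inv S.ϖ, h, inv_one])
        simp only [Prod.mk.injEq] at hpq2
        rcases hpq2 with ⟨h, -⟩ | ⟨h, -⟩ <;> exact hϖinv h
    · -- (1, ϖ), y = 1/2
      have hg' : g = S.αmat t ∨ (0 < t ∧ g = S.αmat t * S.wmat) := by
        rcases hg with h | ⟨-, ht', h⟩
        · exact Or.inl h
        · exact Or.inr ⟨ht', h⟩
      exact ramified_case S S.ϖ_fixed S.ϖ_ne_zero S.ν_ϖ hnorm hsq t hg' hkK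
    · -- (1, ε⁻¹ϖ), y = 1/2
      have hσ : S.σ (S.ε⁻¹ * S.ϖ) = S.ε⁻¹ * S.ϖ := by
        rw [_root_.map_mul, map_inv₀, S.ε_fixed, S.ϖ_fixed]
      have hne : S.ε⁻¹ * S.ϖ ≠ 0 := mul_ne_zero (inv_ne_zero S.ε_ne_zero) S.ϖ_ne_zero
      have hg' : g = S.αmat t ∨ (0 < t ∧ g = S.αmat t * S.wmat) := by
        rcases hg with h | ⟨-, ht', h⟩
        · exact Or.inl h
        · exact Or.inr ⟨ht', h⟩
      exact ramified_case S hσ hne hνεϖ hnorm hsq t hg' hkK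
  · -- easy inclusion
    rintro k ⟨zM, hzM, k', hk', rfl⟩
    obtain ⟨z, hz, rfl⟩ := hzM
    obtain ⟨hk'K, τ, hτ, rfl⟩ := hk'
    refine ⟨?_, ?_⟩
    · show z • (1 : Matrix (Fin 2) (Fin 2) E) * (g * τ * g⁻¹) ∈ S.Kset
      rw [smul_mul_assoc, one_mul]
      exact smul_Kset S hz hk'K
    · refine ⟨z • τ, smul_Tset S hz hτ.1, ?_⟩
      show g * (z • τ) * g⁻¹ = z • (1 : Matrix (Fin 2) (Fin 2) E) * (g * τ * g⁻¹)
      rw [mul_smul_comm, smul_mul_assoc, smul_mul_assoc, one_mul]
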